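/- Every bounded set of diameter 1 in the Euclidean plane can be covered by a regular hexagon whose distance between opposite sides is 1 (equivalently, of side length 1/√3). -/

import Mathlib

open Real

/-- The vertices of a regular hexagon with circumradius (= side length) `1/√3`,
centered at the origin; the distance between opposite sides is `1`. -/
noncomputable def hexVertex (k : Fin 6) : EuclideanSpace ℝ (Fin 2) :=
  (WithLp.equiv 2 (Fin 2 → ℝ)).symm
    ![Real.cos ((k : ℝ) * π / 3) / Real.sqrt 3,
      Real.sin ((k : ℝ) * π / 3) / Real.sqrt 3]

/-- The standard regular hexagon of side length `1/√3`. -/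
noncomputable def stdHexagon : Set (EuclideanSpace ℝ (Fin 2)) :=
  convexHull ℝ (Set.range hexVertex)

section PalAux
open RealInnerProductSpace
noncomputable section

abbrev E := EuclideanSpace ℝ (Fin 2)

def e2 (a b : ℝ) : E := (WithLp.equiv 2 (Fin 2 → ℝ)).symm ![a, b]
@[simp] lemma e2_zero (a b : ℝ) : e2 a b 0 = a := by simp [e2]
@[simp] lemma e2_one (a b : ℝ) : e2 a b 1 = b := by simp [e2]
lemma E_ext {x y : E} (h0 : x 0 = y 0) (h1 : x 1 = y 1) : x = y := by
  ext i; fin_cases i <;> assumption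
lemma inner_E (x y : E) : ⟪x, y⟫ = x 0 * y 0 + x 1 * y 1 := by
  simp [PiLp.inner_apply, Fin.sum_univ_two]; ring
lemma e2_smul (c a b : ℝ) : c • e2 a b = e2 (c*a) (c*b) := by
  apply E_ext <;> simp [e2]
lemma e2_add (a b c d : ℝ) : e2 a b + e2 c d = e2 (a+c) (b+d) := by
  apply E_ext <;> simp [e2]
lemma e2_sub (a b c d : ℝ) : e2 a b - e2 c d = e2 (a-c) (b-d) := by
  apply E_ext <;> simp [e2]
lemma norm_e2 (a b : ℝ) : ‖e2 a b‖ = sqrt (a^2 + b^2) := by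
  rw [EuclideanSpace.norm_eq, Fin.sum_univ_two]
  simp [sq_abs]
lemma norm_e2_le (a b : ℝ) : ‖e2 a b‖ ≤ |a| + |b| := by
  rw [norm_e2]
  have h : sqrt (a^2 + b^2) ≤ sqrt ((|a|+|b|)^2) := by
    apply Real.sqrt_le_sqrt
    nlinarith [abs_nonneg a, abs_nonneg b, sq_abs a, sq_abs b]
  rwa [Real.sqrt_sq (by positivity)] at h

def uv (θ : ℝ) : E := e2 (cos θ) (sin θ)
def rot (φ : ℝ) (x : E) : E := e2 (cos φ * x 0 - sin φ * x 1) (sin φ * x 0 + cos φ * x 1)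

lemma rot_rot (φ ψ : ℝ) (x : E) : rot φ (rot ψ x) = rot (φ + ψ) x := by
  apply E_ext <;> simp [rot, cos_add, sin_add] <;> ring
@[simp] lemma rot_zero (x : E) : rot 0 x = x := by
  apply E_ext <;> simp [rot]
lemma rot_uv (φ ψ : ℝ) : rot φ (uv ψ) = uv (φ + ψ) := by
  apply E_ext <;> simp [rot, uv, cos_add, sin_add] <;> ring
lemma dist_rot (φ : ℝ) (x y : E) : dist (rot φ x) (rot φ y) = dist x y := by
  rw [EuclideanSpace.dist_eq, EuclideanSpace.dist_eq]
  congr 1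
  rw [Fin.sum_univ_two, Fin.sum_univ_two]
  have h := sin_sq_add_cos_sq φ
  simp only [rot, e2_zero, e2_one, Real.dist_eq, sq_abs]
  ring_nf
  linear_combination ((x 0 - y 0)^2 + (x 1 - y 1)^2) * h
lemma inner_rot (φ : ℝ) (x y : E) : ⟪rot φ x, rot φ y⟫ = ⟪x, y⟫ := by
  have h := sin_sq_add_cos_sq φ
  simp only [inner_E, rot, e2_zero, e2_one]
  linear_combination (x 0 * y 0 + x 1 * y 1) * h
lemma uv_add_pi (θ : ℝ) : uv (θ + π) = -uv θ := by
  apply E_ext <;> simp [uv]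
lemma uv_add_two_pi (θ : ℝ) : uv (θ + 2*π) = uv θ := by
  apply E_ext <;> simp [uv, cos_add_two_pi, sin_add_two_pi]
lemma norm_uv (θ : ℝ) : ‖uv θ‖ = 1 := by
  have : ⟪uv θ, uv θ⟫ = 1 := by rw [inner_E]; simp only [uv, e2_zero, e2_one]; nlinarith [sin_sq_add_cos_sq θ]
  have h2 := real_inner_self_eq_norm_sq (uv θ)
  nlinarith [norm_nonneg (uv θ)]
lemma cos_2pi3 : cos (2*π/3) = -(1/2) := by
  rw [show (2*π/3) = π - π/3 by ring, cos_pi_sub, cos_pi_div_three]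
lemma sin_2pi3 : sin (2*π/3) = sqrt 3 / 2 := by
  rw [show (2*π/3) = π - π/3 by ring, sin_pi_sub, sin_pi_div_three]
lemma uv_sum (θ : ℝ) : uv (θ + π/3) = uv θ + uv (θ + 2*π/3) := by
  apply E_ext <;>
    simp [uv, cos_add, sin_add, cos_pi_div_three, sin_pi_div_three, cos_2pi3, sin_2pi3] <;> ring
lemma hexVertex_apply (k : Fin 6) :
    hexVertex k = e2 (cos ((k : ℝ) * π / 3) / sqrt 3) (sin ((k : ℝ) * π / 3) / sqrt 3) := rfl
lemma cos_4pi3 : cos (4*π/3) = -(1/2) := by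
  rw [show (4*π/3) = π + π/3 by ring, cos_add]
  simp [cos_pi_div_three]
lemma sin_4pi3 : sin (4*π/3) = -(sqrt 3 / 2) := by
  rw [show (4*π/3) = π + π/3 by ring, sin_add]
  simp [sin_pi_div_three]
lemma cos_5pi3 : cos (5*π/3) = 1/2 := by
  rw [show (5*π/3) = 2*π - π/3 by ring, cos_sub]
  simp [cos_pi_div_three, cos_two_pi, sin_two_pi]
lemma sin_5pi3 : sin (5*π/3) = -(sqrt 3 / 2) := by
  rw [show (5*π/3) = 2*π - π/3 by ring, sin_sub]
  simp [sin_pi_div_three, cos_two_pi, sin_two_pi]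

lemma hexV0 : hexVertex 0 = e2 (1/sqrt 3) 0 := by
  rw [hexVertex_apply]; norm_num
lemma hexV1 : hexVertex 1 = e2 (1/(2*sqrt 3)) (1/2) := by
  rw [hexVertex_apply]
  have h1 : ((1 : Fin 6) : ℝ) = 1 := by norm_num [Fin.val_one]
  rw [h1, show (1:ℝ)*π/3 = π/3 by ring, cos_pi_div_three, sin_pi_div_three]
  have h3 : sqrt 3 ≠ 0 := by positivity
  apply E_ext <;> simp only [e2_zero, e2_one] <;> field_simp <;> ring
lemma hexV2 : hexVertex 2 = e2 (-(1/(2*sqrt 3))) (1/2) := by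
  rw [hexVertex_apply]
  have h1 : ((2 : Fin 6) : ℝ) = 2 := by norm_num [show (2:Fin 6).val = 2 from rfl]
  rw [h1, show (2:ℝ)*π/3 = 2*π/3 by ring, cos_2pi3, sin_2pi3]
  have h3 : sqrt 3 ≠ 0 := by positivity
  apply E_ext <;> simp only [e2_zero, e2_one] <;> field_simp <;> ring
lemma hexV3 : hexVertex 3 = e2 (-(1/sqrt 3)) 0 := by
  rw [hexVertex_apply]
  have h1 : ((3 : Fin 6) : ℝ) = 3 := by norm_num [show (3:Fin 6).val = 3 from rfl]
  rw [h1, show (3:ℝ)*π/3 = π by ring, cos_pi, sin_pi]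
  apply E_ext <;> simp only [e2_zero, e2_one] <;> field_simp <;> simp
lemma hexV4 : hexVertex 4 = e2 (-(1/(2*sqrt 3))) (-(1/2)) := by
  rw [hexVertex_apply]
  have h1 : ((4 : Fin 6) : ℝ) = 4 := by norm_num [show (4:Fin 6).val = 4 from rfl]
  rw [h1, show (4:ℝ)*π/3 = 4*π/3 by ring, cos_4pi3, sin_4pi3]
  have h3 : sqrt 3 ≠ 0 := by positivity
  apply E_ext <;> simp only [e2_zero, e2_one] <;> field_simp <;> ring
lemma hexV5 : hexVertex 5 = e2 (1/(2*sqrt 3)) (-(1/2)) := by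
  rw [hexVertex_apply]
  have h1 : ((5 : Fin 6) : ℝ) = 5 := by norm_num [show (5:Fin 6).val = 5 from rfl]
  rw [h1, show (5:ℝ)*π/3 = 5*π/3 by ring, cos_5pi3, sin_5pi3]
  have h3 : sqrt 3 ≠ 0 := by positivity
  apply E_ext <;> simp only [e2_zero, e2_one] <;> field_simp <;> ring
lemma hexMem (w : Fin 6 → ℝ) (hw : ∀ i, 0 ≤ w i) (hsum : ∑ i, w i = 1) :
    ∑ i, w i • hexVertex i ∈ stdHexagon :=
  (convex_convexHull ℝ _).sum_mem (fun i _ => hw i) hsum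
    (fun i _ => subset_convexHull ℝ _ (Set.mem_range_self i))


lemma key' (p q w0 w1 w2 w3 w4 w5 : ℝ) (g0 : 0 ≤ w0) (g1 : 0 ≤ w1) (g2 : 0 ≤ w2)
    (g3 : 0 ≤ w3) (g4 : 0 ≤ w4) (g5 : 0 ≤ w5) (hsum : w0+w1+w2+w3+w4+w5 = 1)
    (heq : w0 • hexVertex 0 + w1 • hexVertex 1 + w2 • hexVertex 2 + w3 • hexVertex 3
      + w4 • hexVertex 4 + w5 • hexVertex 5 = e2 p q) : e2 p q ∈ stdHexagon := by
  rw [← heq]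
  have h := hexMem ![w0,w1,w2,w3,w4,w5]
    (by intro i; fin_cases i <;> assumption)
    (by rw [Fin.sum_univ_six]; exact hsum)
  rw [Fin.sum_univ_six] at h
  exact h

lemma core_hexagon (p q : ℝ) (h1 : |sqrt 3 * p + q| ≤ 1) (h2 : |q| ≤ 1/2)
    (h3 : |sqrt 3 * p - q| ≤ 1) : e2 p q ∈ stdHexagon := by
  have hs : (0:ℝ) < sqrt 3 := by positivity
  set s := sqrt 3 with hs_def
  have hsne : s ≠ 0 := ne_of_gt hs
  obtain ⟨h1a, h1b⟩ := abs_le.mp h1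
  obtain ⟨h2a, h2b⟩ := abs_le.mp h2
  obtain ⟨h3a, h3b⟩ := abs_le.mp h3
  have hv : ∀ w0 w1 w2 w3 w4 w5 : ℝ,
      w0 • hexVertex 0 + w1 • hexVertex 1 + w2 • hexVertex 2 + w3 • hexVertex 3
      + w4 • hexVertex 4 + w5 • hexVertex 5
      = e2 ((w0 - w3 + (w1 - w2 - w4 + w5)/2)/s) ((w1 + w2 - w4 - w5)/2) := by
    intro w0 w1 w2 w3 w4 w5
    rw [hexV0, hexV1, hexV2, hexV3, hexV4, hexV5]
    rw [e2_smul, e2_smul, e2_smul, e2_smul, e2_smul, e2_smul,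
      e2_add, e2_add, e2_add, e2_add, e2_add]
    apply E_ext <;> simp only [e2_zero, e2_one] <;> field_simp <;> ring
  rcases le_or_gt 0 q with hq | hq
  · rcases le_or_gt q (s*p) with hc | hc
    · -- sector 0
      refine key' p q (s*p - q + (1 - (s*p+q))/2) (2*q) 0 ((1 - (s*p+q))/2) 0 0
        (by linarith) (by linarith) le_rfl (by linarith) le_rfl le_rfl (by ring) ?_
      rw [hv]; apply E_ext <;> simp only [e2_zero, e2_one] <;> field_simp <;> ring
    · rcases le_or_gt (-q) (s*p) with hc2 | hc2
      · -- sector 1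
        refine key' p q ((1-2*q)/2) (q + s*p) (q - s*p) ((1-2*q)/2) 0 0
          (by linarith) (by linarith) (by linarith) (by linarith) le_rfl le_rfl (by ring) ?_
        rw [hv]; apply E_ext <;> simp only [e2_zero, e2_one] <;> field_simp <;> ring
      · -- sector 2
        refine key' p q ((1 - (q - s*p))/2) 0 (2*q) (-(s*p) - q + (1 - (q - s*p))/2) 0 0
          (by linarith) le_rfl (by linarith) (by linarith) le_rfl le_rfl (by ring) ?_
        rw [hv]; apply E_ext <;> simp only [e2_zero, e2_one] <;> field_simp <;> ring
  · rcases le_or_gt (s*p) q with hc | hc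
    · -- sector 3
      refine key' p q ((1 - (-(s*p)-q))/2) 0 0 (q - s*p + (1 - (-(s*p)-q))/2) (-(2*q)) 0
        (by linarith) le_rfl le_rfl (by linarith) (by linarith) le_rfl (by ring) ?_
      rw [hv]; apply E_ext <;> simp only [e2_zero, e2_one] <;> field_simp <;> ring
    · rcases le_or_gt (s*p) (-q) with hc2 | hc2
      · -- sector 4
        refine key' p q ((1+2*q)/2) 0 0 ((1+2*q)/2) (-q - s*p) (-q + s*p)
          (by linarith) le_rfl le_rfl (by linarith) (by linarith) (by linarith) (by ring) ?_
        rw [hv]; apply E_ext <;> simp only [e2_zero, e2_one] <;> field_simp <;> ring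
      · -- sector 5
        refine key' p q (s*p + q + (1 - (s*p - q))/2) 0 0 ((1 - (s*p - q))/2) 0 (-(2*q))
          (by linarith) le_rfl le_rfl (by linarith) le_rfl (by linarith) (by ring) ?_
        rw [hv]; apply E_ext <;> simp only [e2_zero, e2_one] <;> field_simp <;> ring

lemma inner_uv (a b : ℝ) : ⟪uv a, uv b⟫ = cos (a - b) := by
  rw [inner_E, cos_sub]
  simp [uv]

/-- translation + rotation isometry -/
noncomputable def rti (φ : ℝ) (c : E) : E ≃ᵢ E where
  toFun x := c + rot φ x
  invFun y := rot (-φ) (y - c)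
  left_inv x := by
    show rot (-φ) (c + rot φ x - c) = x
    rw [add_sub_cancel_left, rot_rot, neg_add_cancel, rot_zero]
  right_inv y := by
    show c + rot φ (rot (-φ) (y - c)) = y
    rw [rot_rot, add_neg_cancel, rot_zero, add_sub_cancel]
  isometry_toFun := Isometry.of_dist_eq fun a b => by
    rw [dist_add_left, dist_rot]

theorem pal_hexagon_cover (S : Set (EuclideanSpace ℝ (Fin 2)))
    (hS : Bornology.IsBounded S) (hd : Metric.diam S = 1) :
    ∃ f : EuclideanSpace ℝ (Fin 2) ≃ᵢ EuclideanSpace ℝ (Fin 2),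
      S ⊆ f '' stdHexagon := by
  have hne : S.Nonempty := by
    rcases S.eq_empty_or_nonempty with h | h
    · rw [h, Metric.diam_empty] at hd; norm_num at hd
    · exact h
  obtain ⟨R₀, hR₀⟩ := hS.exists_norm_le
  set R : ℝ := max R₀ 0 with hR_def
  have hR : ∀ x ∈ S, ‖x‖ ≤ R := fun x hx => (hR₀ x hx).trans (le_max_left _ _)
  have hR0 : (0:ℝ) ≤ R := le_max_right _ _
  set h : E → ℝ := fun v => sSup ((fun x => ⟪x, v⟫) '' S) with h_def
  have hbdd : ∀ v : E, BddAbove ((fun x => ⟪x, v⟫) '' S) := by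
    intro v
    refine ⟨R * ‖v‖, ?_⟩
    rintro - ⟨x, hx, rfl⟩
    calc ⟪x, v⟫ ≤ ‖x‖ * ‖v‖ := real_inner_le_norm x v
    _ ≤ R * ‖v‖ := by gcongr; exact hR x hx
  have hle : ∀ (v : E), ∀ x ∈ S, ⟪x, v⟫ ≤ h v := fun v x hx =>
    le_csSup (hbdd v) ⟨x, hx, rfl⟩
  have himg : ∀ v : E, ((fun x => ⟪x, v⟫) '' S).Nonempty := fun v => hne.image _
  have hsum : ∀ v : E, ‖v‖ = 1 → h v + h (-v) ≤ 1 := by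
    intro v hv
    have : h v ≤ 1 - h (-v) := by
      apply csSup_le (himg v)
      rintro - ⟨x, hx, rfl⟩
      have : h (-v) ≤ 1 - ⟪x, v⟫ := by
        apply csSup_le (himg (-v))
        rintro - ⟨y, hy, rfl⟩
        have h1 : ⟪x, v⟫ + ⟪y, -v⟫ = ⟪x - y, v⟫ := by
          rw [inner_neg_right, inner_sub_left]; ring
        have h2 : ⟪x - y, v⟫ ≤ ‖x - y‖ * ‖v‖ := real_inner_le_norm _ _
        have h3 : ‖x - y‖ ≤ 1 := by
          rw [← dist_eq_norm, ← hd]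
          exact Metric.dist_le_diam_of_mem hS hx hy
        rw [hv] at h2
        linarith
      linarith
    linarith
  have hlip : ∀ v w : E, h v ≤ h w + R * ‖v - w‖ := by
    intro v w
    apply csSup_le (himg v)
    rintro - ⟨x, hx, rfl⟩
    have h1 : ⟪x, v⟫ = ⟪x, w⟫ + ⟪x, v - w⟫ := by rw [inner_sub_right]; ring
    have h2 : ⟪x, v - w⟫ ≤ ‖x‖ * ‖v - w‖ := real_inner_le_norm _ _
    have h3 : ⟪x, w⟫ ≤ h w := hle w x hx
    have h4 : ‖x‖ * ‖v - w‖ ≤ R * ‖v - w‖ := by gcongr; exact hR x hx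
    linarith
  set g : ℝ → ℝ := fun θ => h (uv θ) with g_def
  have hglip : ∀ a b : ℝ, dist (g a) (g b) ≤ (2*R) * dist a b := by
    intro a b
    have hnorm : ‖uv a - uv b‖ ≤ 2 * dist a b := by
      have := norm_e2_le (cos a - cos b) (sin a - sin b)
      rw [uv, uv, e2_sub] at *
      have hone : ∀ t : ℝ, |sin t| ≤ 1 := fun t => abs_le.mpr ⟨neg_one_le_sin t, sin_le_one t⟩
      have habs : ∀ t : ℝ, |sin t| ≤ |t| := fun t => Real.abs_sin_le_abs
      have hc : |cos a - cos b| ≤ dist a b := by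
        rw [Real.cos_sub_cos, Real.dist_eq]
        have h1 := hone ((a+b)/2)
        have h2 := habs ((a-b)/2)
        rw [abs_div, abs_two] at h2
        rw [show (-2 : ℝ) * sin ((a+b)/2) * sin ((a-b)/2)
            = -(2 * sin ((a+b)/2) * sin ((a-b)/2)) by ring, abs_neg, abs_mul, abs_mul, abs_two]
        nlinarith [abs_nonneg (sin ((a+b)/2)), abs_nonneg (sin ((a-b)/2)), abs_nonneg (a-b)]
      have hs : |sin a - sin b| ≤ dist a b := by
        rw [Real.sin_sub_sin, Real.dist_eq]
        have h1 := hone ((a-b)/2)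
        have h1' : |cos ((a+b)/2)| ≤ 1 := abs_le.mpr ⟨neg_one_le_cos _, cos_le_one _⟩
        have h2 := habs ((a-b)/2)
        rw [abs_div, abs_two] at h2
        rw [abs_mul, abs_mul, abs_two]
        nlinarith [abs_nonneg (sin ((a-b)/2)), abs_nonneg (cos ((a+b)/2)), abs_nonneg (a-b)]
      calc ‖e2 (cos a - cos b) (sin a - sin b)‖ ≤ |cos a - cos b| + |sin a - sin b| :=
        norm_e2_le _ _
      _ ≤ 2 * dist a b := by linarith
    have h1 : g a ≤ g b + R * ‖uv a - uv b‖ := hlip (uv a) (uv b)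
    have h2 : g b ≤ g a + R * ‖uv b - uv a‖ := hlip (uv b) (uv a)
    rw [norm_sub_rev (uv b)] at h2
    rw [Real.dist_eq, abs_le]
    constructor <;> nlinarith [mul_le_mul_of_nonneg_left hnorm hR0]
  have hgcont : Continuous g := by
    have : LipschitzWith (2*R).toNNReal g := by
      apply LipschitzWith.of_dist_le_mul
      intro a b
      rw [Real.coe_toNNReal _ (by linarith)]
      exact hglip a b
    exact this.continuous
  have hgper : ∀ t : ℝ, g (t + 2*π) = g t := fun t => by
    rw [g_def]; simp only; rw [uv_add_two_pi]
  set P : ℝ → ℝ := fun θ => g θ + g (θ + 2*π/3) + g (θ + 4*π/3) with P_def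
  set D : ℝ → ℝ := fun θ => P θ - P (θ + π) with D_def
  have hPcont : Continuous P := by
    apply Continuous.add
    apply Continuous.add hgcont
    · exact hgcont.comp (continuous_id.add continuous_const)
    · exact hgcont.comp (continuous_id.add continuous_const)
  have hDcont : Continuous D :=
    hPcont.sub (hPcont.comp (continuous_id.add continuous_const))
  have hPper : ∀ θ : ℝ, P (θ + 2*π) = P θ := by
    intro θ
    have e1 : θ + 2*π + 2*π/3 = (θ + 2*π/3) + 2*π := by ring
    have e2 : θ + 2*π + 4*π/3 = (θ + 4*π/3) + 2*π := by ring
    simp only [P_def]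
    rw [e1, e2, hgper, hgper, hgper]
  have hDneg : ∀ θ : ℝ, D (θ + π) = -(D θ) := by
    intro θ
    have e1 : θ + π + π = θ + 2*π := by ring
    simp only [D_def]
    rw [e1, hPper]
    ring
  -- find a zero of D
  obtain ⟨θ, hθ⟩ : ∃ θ : ℝ, D θ = 0 := by
    rcases le_total (D 0) 0 with hc | hc
    · have hπ : 0 ≤ D π := by
        have := hDneg 0
        rw [zero_add] at this
        linarith
      obtain ⟨θ, -, hθ⟩ := intermediate_value_Icc Real.pi_pos.le hDcont.continuousOn
        (Set.mem_Icc.mpr ⟨hc, hπ⟩)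
      exact ⟨θ, hθ⟩
    · have hπ : D π ≤ 0 := by
        have := hDneg 0
        rw [zero_add] at this
        linarith
      obtain ⟨θ, -, hθ⟩ := intermediate_value_Icc' Real.pi_pos.le hDcont.continuousOn
        (Set.mem_Icc.mpr ⟨hπ, hc⟩)
      exact ⟨θ, hθ⟩
  set v1 : E := uv θ with v1_def
  set v2 : E := uv (θ + π/3) with v2_def
  set v3 : E := uv (θ + 2*π/3) with v3_def
  have hw1 : h v1 + h (-v1) ≤ 1 := hsum v1 (by rw [v1_def]; exact norm_uv θ)
  have hw2 : h v2 + h (-v2) ≤ 1 := hsum v2 (by rw [v2_def]; exact norm_uv _)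
  have hw3 : h v3 + h (-v3) ≤ 1 := hsum v3 (by rw [v3_def]; exact norm_uv _)
  -- rewrite P θ and P (θ+π)
  have hP1 : P θ = h v1 + h (-v2) + h v3 := by
    simp only [P_def, g_def]
    have e1 : θ + 4*π/3 = (θ + π/3) + π := by ring
    rw [e1, uv_add_pi, ← v1_def, ← v2_def, ← v3_def]
    ring
  have hP2 : P (θ + π) = h (-v1) + h v2 + h (-v3) := by
    simp only [P_def, g_def]
    have e1 : θ + π + 2*π/3 = (θ + 2*π/3) + π := by ring
    have e2 : θ + π + 4*π/3 = (θ + π/3) + 2*π := by ring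
    rw [e1, e2, uv_add_pi, uv_add_pi, uv_add_two_pi, ← v1_def, ← v2_def, ← v3_def]
    ring
  have hPsum : P θ + P (θ + π) ≤ 3 := by rw [hP1, hP2]; linarith
  have hPeq : P θ = P (θ + π) := by
    have : D θ = P θ - P (θ + π) := rfl
    linarith [hθ, this ▸ hθ]
  clear_value P D
  have hhalf : P θ ≤ 3/2 ∧ P (θ + π) ≤ 3/2 := by
    constructor <;> linarith [hPsum, hPeq]
  have hQ1 : h v1 + h (-v2) + h v3 ≤ 3/2 := by rw [← hP1]; exact hhalf.1
  have hQ2 : h (-v1) + h v2 + h (-v3) ≤ 3/2 := by rw [← hP2]; exact hhalf.2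
  -- choose slab centers
  set L : ℝ := max (h v2 - 1/2) ((h v1 - 1/2) + (h v3 - 1/2)) with L_def
  set m1 : ℝ := max (h v1 - 1/2) (L - (1/2 - h (-v3))) with m1_def
  set m3 : ℝ := L - m1 with m3_def
  set m2 : ℝ := L with m2_def
  have hLle : L ≤ 1/2 - h (-v2) := by
    apply max_le <;> linarith
  have hLle' : L ≤ (1/2 - h (-v1)) + (1/2 - h (-v3)) := by
    apply max_le <;> linarith
  have hm1l : h v1 - 1/2 ≤ m1 := le_max_left _ _
  have hm1u : m1 ≤ 1/2 - h (-v1) := by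
    apply max_le <;> linarith
  have hm3l : h v3 - 1/2 ≤ m3 := by
    rw [m3_def]
    have h1 : m1 ≤ L - (h v3 - 1/2) := by
      apply max_le
      · have := le_max_right (h v2 - 1/2) ((h v1 - 1/2) + (h v3 - 1/2))
        rw [← L_def] at this
        linarith
      · linarith
    linarith
  have hm3u : m3 ≤ 1/2 - h (-v3) := by
    rw [m3_def]
    have := le_max_right (h v1 - 1/2) (L - (1/2 - h (-v3)))
    rw [← m1_def] at this
    linarith
  have hm2l : h v2 - 1/2 ≤ m2 := le_max_left _ _
  have hm2u : m2 ≤ 1/2 - h (-v2) := hLle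
  have hm2eq : m2 = m1 + m3 := by rw [m2_def, m3_def]; ring
  -- the center point
  set x0 : E := ((4*m1+2*m3)/3) • v1 + ((2*m1+4*m3)/3) • v3 with x0_def
  have hv11 : ⟪v1, v1⟫ = 1 := by
    rw [v1_def, inner_uv]; simp
  have hv33 : ⟪v3, v3⟫ = 1 := by
    rw [v3_def, inner_uv]; simp
  have hv13 : ⟪v3, v1⟫ = -(1/2) := by
    rw [v1_def, v3_def, inner_uv, show θ + 2*π/3 - θ = 2*π/3 by ring]
    rw [show (2*π/3) = π - π/3 by ring, cos_pi_sub, cos_pi_div_three]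
  have hv31 : ⟪v1, v3⟫ = -(1/2) := by
    rw [v1_def, v3_def, inner_uv, show θ - (θ + 2*π/3) = -(2*π/3) by ring, cos_neg]
    rw [show (2*π/3) = π - π/3 by ring, cos_pi_sub, cos_pi_div_three]
  have hx1 : ⟪x0, v1⟫ = m1 := by
    rw [x0_def, inner_add_left, real_inner_smul_left, real_inner_smul_left, hv11, hv13]
    ring
  have hx3 : ⟪x0, v3⟫ = m3 := by
    rw [x0_def, inner_add_left, real_inner_smul_left, real_inner_smul_left, hv31, hv33]
    ring
  have hx2 : ⟪x0, v2⟫ = m2 := by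
    have : v2 = v1 + v3 := by rw [v1_def, v2_def, v3_def, uv_sum]
    rw [this, inner_add_right, hx1, hx3, hm2eq]
  -- bounds for points of S
  have hbound : ∀ x ∈ S, ∀ (v : E) (m : ℝ), ⟪x0, v⟫ = m → h v - 1/2 ≤ m →
      m ≤ 1/2 - h (-v) → |⟪x - x0, v⟫| ≤ 1/2 := by
    intro x hx v m hm hml hmu
    rw [inner_sub_left, hm, abs_le]
    have h1 : ⟪x, v⟫ ≤ h v := hle v x hx
    have h2 : ⟪x, -v⟫ ≤ h (-v) := hle (-v) x hx
    rw [inner_neg_right] at h2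
    constructor <;> linarith
  set φ : ℝ := θ - π/6 with φ_def
  refine ⟨rti φ x0, ?_⟩
  intro x hx
  set z : E := rot (-φ) (x - x0) with z_def
  have hfz : (rti φ x0) z = x := by
    simp only [rti, IsometryEquiv.coe_mk, Equiv.coe_fn_mk]
    rw [z_def, rot_rot, add_neg_cancel, rot_zero, add_sub_cancel]
  have hinner : ∀ ψ : ℝ, ⟪z, uv ψ⟫ = ⟪x - x0, uv (φ + ψ)⟫ := by
    intro ψ
    rw [← inner_rot φ, z_def, rot_rot, add_neg_cancel, rot_zero, rot_uv]
  have hz1 : |⟪z, uv (π/6)⟫| ≤ 1/2 := by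
    rw [hinner, show φ + π/6 = θ by rw [φ_def]; ring, ← v1_def]
    exact hbound x hx v1 m1 hx1 hm1l hm1u
  have hz2 : |⟪z, uv (π/2)⟫| ≤ 1/2 := by
    rw [hinner, show φ + π/2 = θ + π/3 by rw [φ_def]; ring, ← v2_def]
    exact hbound x hx v2 m2 hx2 hm2l hm2u
  have hz3 : |⟪z, uv (5*π/6)⟫| ≤ 1/2 := by
    rw [hinner, show φ + 5*π/6 = θ + 2*π/3 by rw [φ_def]; ring, ← v3_def]
    exact hbound x hx v3 m3 hx3 hm3l hm3u
  -- convert inner products with uv to coordinates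
  have huv6 : ⟪z, uv (π/6)⟫ = (sqrt 3 * z 0 + z 1)/2 := by
    rw [inner_E, uv, e2_zero, e2_one, cos_pi_div_six, sin_pi_div_six]
    ring
  have huv2 : ⟪z, uv (π/2)⟫ = z 1 := by
    rw [inner_E, uv, e2_zero, e2_one, cos_pi_div_two, sin_pi_div_two]
    ring
  have huv56 : ⟪z, uv (5*π/6)⟫ = -(sqrt 3 * z 0 - z 1)/2 := by
    rw [inner_E, uv, e2_zero, e2_one, show (5*π/6) = π - π/6 by ring,
      cos_pi_sub, sin_pi_sub, cos_pi_div_six, sin_pi_div_six]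
    ring
  rw [huv6] at hz1
  rw [huv2] at hz2
  rw [huv56] at hz3
  have hzmem : z ∈ stdHexagon := by
    have hze : z = e2 (z 0) (z 1) := E_ext (by simp) (by simp)
    rw [hze]
    apply core_hexagon
    · rw [abs_div] at hz1
      have : |(2:ℝ)| = 2 := by norm_num
      rw [this] at hz1
      linarith [abs_nonneg (sqrt 3 * z 0 + z 1)]
    · exact hz2
    · rw [abs_div, abs_neg, show |(2:ℝ)| = 2 by norm_num] at hz3
      linarith
  exact ⟨z, hzmem, hfz⟩

end
end PalAux
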